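/- Let M̂1 and M̂2 be AMA menus indexed by {0,...,K}, let K1, K2 ⊆ {0,...,K}, and let φ : {0,...,K} → K1 × K2 be a bijection, with components φ1, φ2, such that for every k the k-th option of M̂1 equals its φ1(k)-th option and the k-th option of M̂2 equals its φ2(k)-th option. Assume that with F-probability 1: the boosted-welfare-maximizing options with minimal β of M̂1 and M̂2, as well as, for every buyer i, maximizers of the boosted welfare of v_{-i}, can be chosen in K1 and K2 respectively. Then for every λ ∈ [0,1], the convex combination M = λ M̂1 + (1−λ) M̂2 satisfies Rev(M) ≥ λ Rev(M̂1) + (1−λ) Rev(M̂2). -/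
import Mathlib


open MeasureTheory Finset

namespace AMA

/-- An AMA menu: for each of the `K+1` option indices, an allocation
`x : Fin m → Fin n → ℝ` (buyer `i` receives `x i j` of item `j`) and a boost `β : ℝ`. -/
abbrev Menu (m n K : ℕ) := Fin (K + 1) → (Fin m → Fin n → ℝ) × ℝ

/-- Inner product of a valuation and an allocation. -/
def dotp {n : ℕ} (v x : Fin n → ℝ) : ℝ := ∑ j, v j * x j

/-- A valid AMA menu: entries in `[0,1]`, each item allocated at most once in total,
default option `(0, 0)`. -/
def IsMenu {m n K : ℕ} (M : Menu m n K) : Prop :=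
  (∀ k i j, 0 ≤ (M k).1 i j ∧ (M k).1 i j ≤ 1) ∧
  (∀ k j, ∑ i, (M k).1 i j ≤ 1) ∧ M 0 = 0

/-- The set of valuation profiles: each buyer's valuation lies in `[0,1]^n` with
coordinate sum at most `1`. -/
def VP (m n : ℕ) : Set (Fin m → Fin n → ℝ) :=
  {v | ∀ i, (∀ j, 0 ≤ v i j ∧ v i j ≤ 1) ∧ ∑ j, v i j ≤ 1}

/-- Boosted welfare of option `k` at the valuation profile `v`. -/
def bw {m n K : ℕ} (M : Menu m n K) (v : Fin m → Fin n → ℝ) (k : Fin (K + 1)) : ℝ :=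
  (∑ i, dotp (v i) ((M k).1 i)) + (M k).2

/-- Boosted welfare of option `k` at `v` when buyer `i` is omitted. -/
def bwWo {m n K : ℕ} (M : Menu m n K) (v : Fin m → Fin n → ℝ) (i : Fin m)
    (k : Fin (K + 1)) : ℝ :=
  (∑ l ∈ Finset.univ.erase i, dotp (v l) ((M k).1 l)) + (M k).2

/-- Maximal boosted welfare `W(v)`. -/
noncomputable def W {m n K : ℕ} (M : Menu m n K) (v : Fin m → Fin n → ℝ) : ℝ :=
  Finset.univ.sup' Finset.univ_nonempty (bw M v)

/-- Maximal boosted welfare `W(v₋ᵢ)` with buyer `i` omitted. -/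
noncomputable def WWo {m n K : ℕ} (M : Menu m n K) (v : Fin m → Fin n → ℝ)
    (i : Fin m) : ℝ :=
  Finset.univ.sup' Finset.univ_nonempty (bwWo M v i)

/-- The minimal boost among boosted-welfare-maximizing options (tie-breaking in favor
of maximal total payment). -/
noncomputable def minBeta {m n K : ℕ} (M : Menu m n K) (v : Fin m → Fin n → ℝ) : ℝ :=
  sInf {b : ℝ | ∃ k, bw M v k = W M v ∧ b = (M k).2}

/-- Total payment collected at `v`:
`∑ i W(v₋ᵢ) − (m−1) W(v) − min {β k : W_k(v) = W(v)}`. -/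
noncomputable def pay {m n K : ℕ} (M : Menu m n K) (v : Fin m → Fin n → ℝ) : ℝ :=
  (∑ i, WWo M v i) - ((m : ℝ) - 1) * W M v - minBeta M v

/-- Expected revenue of the AMA menu `M` under the profile distribution `F`. -/
noncomputable def Rev {m n K : ℕ} (F : Measure (Fin m → Fin n → ℝ))
    (M : Menu m n K) : ℝ :=
  ∫ v, pay M v ∂F

/-- Option-wise convex combination of two AMA menus. -/
noncomputable def comb {m n K : ℕ} (lam : ℝ) (M M' : Menu m n K) : Menu m n K :=
  fun k => (fun i j => lam * (M k).1 i j + (1 - lam) * (M' k).1 i j,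
            lam * (M k).2 + (1 - lam) * (M' k).2)

/-- The event that the option subset `K'` suffices at `v`: some boosted-welfare
maximizer with minimal boost lies in `K'`, and for every buyer `i` some maximizer of the
boosted welfare of `v₋ᵢ` lies in `K'`. -/
def GoodEvent {m n K : ℕ} (M : Menu m n K) (K' : Finset (Fin (K + 1)))
    (v : Fin m → Fin n → ℝ) : Prop :=
  (∃ k ∈ K', bw M v k = W M v ∧ (M k).2 = minBeta M v) ∧
  ∀ i : Fin m, ∃ k ∈ K', bwWo M v i k = WWo M v i

/-- `M` is `ε`-reducible: some subset `K'` of options containing the default option, of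
cardinality at most `√(K+1)`, whose good event has probability at least `1 - ε/m`. -/
def Reducible {m n K : ℕ} (F : Measure (Fin m → Fin n → ℝ)) (M : Menu m n K)
    (ε : ℝ) : Prop :=
  ∃ K' : Finset (Fin (K + 1)), 0 ∈ K' ∧ (K'.card : ℝ) ≤ Real.sqrt (K + 1) ∧
    (F {v | GoodEvent M K' v}).toReal ≥ 1 - ε / (m : ℝ)

/-- `M₁` and `M₂` are `ε`-mode-connected by a piecewise linear path with `pieces`
linear pieces, all whose menus are valid AMA menus and have revenue at least
`min (Rev M₁) (Rev M₂) - ε`. -/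
def PLConnected {m n K : ℕ} (F : Measure (Fin m → Fin n → ℝ)) (M₁ M₂ : Menu m n K)
    (ε : ℝ) (pieces : ℕ) : Prop :=
  ∃ P : Fin (pieces + 1) → Menu m n K, P 0 = M₁ ∧ P (Fin.last pieces) = M₂ ∧
    (∀ i, IsMenu (P i)) ∧
    ∀ i : Fin pieces, ∀ lam ∈ Set.Icc (0 : ℝ) 1,
      Rev F (comb lam (P i.castSucc) (P i.succ)) ≥ min (Rev F M₁) (Rev F M₂) - ε


section Aux

variable {m n K : ℕ}

lemma dotp_comb (lam : ℝ) (v x y : Fin n → ℝ) :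
    dotp v (fun j => lam * x j + (1 - lam) * y j)
      = lam * dotp v x + (1 - lam) * dotp v y := by
  simp only [dotp, Finset.mul_sum, ← Finset.sum_add_distrib]
  exact Finset.sum_congr rfl fun j _ => by ring

lemma bw_comb (lam : ℝ) (M M' : Menu m n K) (v : Fin m → Fin n → ℝ) (k : Fin (K + 1)) :
    bw (comb lam M M') v k = lam * bw M v k + (1 - lam) * bw M' v k := by
  simp only [bw, comb, dotp_comb]
  rw [Finset.sum_add_distrib, ← Finset.mul_sum, ← Finset.mul_sum]
  ring

lemma bwWo_comb (lam : ℝ) (M M' : Menu m n K) (v : Fin m → Fin n → ℝ) (i : Fin m)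
    (k : Fin (K + 1)) :
    bwWo (comb lam M M') v i k = lam * bwWo M v i k + (1 - lam) * bwWo M' v i k := by
  simp only [bwWo, comb, dotp_comb]
  rw [Finset.sum_add_distrib, ← Finset.mul_sum, ← Finset.mul_sum]
  ring

lemma bw_congr {M : Menu m n K} {k k' : Fin (K + 1)} (h : M k = M k')
    (v : Fin m → Fin n → ℝ) : bw M v k = bw M v k' := by
  simp only [bw, h]

lemma bwWo_congr {M : Menu m n K} {k k' : Fin (K + 1)} (h : M k = M k')
    (v : Fin m → Fin n → ℝ) (i : Fin m) : bwWo M v i k = bwWo M v i k' := by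
  simp only [bwWo, h]

lemma le_W (M : Menu m n K) (v : Fin m → Fin n → ℝ) (k : Fin (K + 1)) :
    bw M v k ≤ W M v := Finset.le_sup' _ (Finset.mem_univ k)

lemma W_le {M : Menu m n K} {v : Fin m → Fin n → ℝ} {c : ℝ}
    (h : ∀ k, bw M v k ≤ c) : W M v ≤ c :=
  Finset.sup'_le _ _ fun k _ => h k

lemma le_WWo (M : Menu m n K) (v : Fin m → Fin n → ℝ) (i : Fin m) (k : Fin (K + 1)) :
    bwWo M v i k ≤ WWo M v i := Finset.le_sup' _ (Finset.mem_univ k)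

lemma WWo_le {M : Menu m n K} {v : Fin m → Fin n → ℝ} {i : Fin m} {c : ℝ}
    (h : ∀ k, bwWo M v i k ≤ c) : WWo M v i ≤ c :=
  Finset.sup'_le _ _ fun k _ => h k

lemma exists_W (M : Menu m n K) (v : Fin m → Fin n → ℝ) :
    ∃ k, bw M v k = W M v := by
  obtain ⟨k, -, h⟩ := Finset.exists_mem_eq_sup' (Finset.univ_nonempty) (bw M v)
  exact ⟨k, h.symm⟩

/-- The set of boosted-welfare maximizers. -/
noncomputable def argS (M : Menu m n K) (v : Fin m → Fin n → ℝ) : Finset (Fin (K + 1)) :=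
  Finset.univ.filter (fun k => bw M v k = W M v)

lemma argS_nonempty (M : Menu m n K) (v : Fin m → Fin n → ℝ) : (argS M v).Nonempty := by
  obtain ⟨k, hk⟩ := exists_W M v
  exact ⟨k, by simp [argS, hk]⟩

lemma minBeta_eq (M : Menu m n K) (v : Fin m → Fin n → ℝ) :
    minBeta M v = (argS M v).inf' (argS_nonempty M v) (fun k => (M k).2) := by
  rw [Finset.inf'_eq_csInf_image]
  unfold minBeta
  congr 1
  ext b
  simp only [Set.mem_setOf_eq, Set.mem_image, Finset.mem_coe, argS, Finset.mem_filter,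
    Finset.mem_univ, true_and]
  constructor
  · rintro ⟨k, hk, rfl⟩; exact ⟨k, hk, rfl⟩
  · rintro ⟨k, hk, rfl⟩; exact ⟨k, hk, rfl⟩

lemma minBeta_le {M : Menu m n K} {v : Fin m → Fin n → ℝ} {k : Fin (K + 1)}
    (h : bw M v k = W M v) : minBeta M v ≤ (M k).2 := by
  rw [minBeta_eq]
  exact Finset.inf'_le _ (by simp [argS, h])

lemma exists_minBeta (M : Menu m n K) (v : Fin m → Fin n → ℝ) :
    ∃ k, bw M v k = W M v ∧ (M k).2 = minBeta M v := by
  rw [minBeta_eq]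
  obtain ⟨k, hk, h⟩ := Finset.exists_mem_eq_inf' (argS_nonempty M v) (fun k => (M k).2)
  refine ⟨k, ?_, h.symm⟩
  simpa [argS] using hk

end Aux

lemma key {m n K : ℕ} (lam : ℝ) (hl0 : 0 ≤ lam) (hl1 : lam ≤ 1)
    (N₁ N₂ : Menu m n K) (K₁ K₂ : Finset (Fin (K + 1)))
    (φ : Fin (K + 1) → Fin (K + 1) × Fin (K + 1))
    (hφsurj : ∀ p : Fin (K + 1) × Fin (K + 1), p.1 ∈ K₁ → p.2 ∈ K₂ → ∃ k, φ k = p)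
    (hrep₁ : ∀ k, N₁ k = N₁ (φ k).1) (hrep₂ : ∀ k, N₂ k = N₂ (φ k).2)
    (v : Fin m → Fin n → ℝ) (h1 : GoodEvent N₁ K₁ v) (h2 : GoodEvent N₂ K₂ v) :
    lam * pay N₁ v + (1 - lam) * pay N₂ v ≤ pay (comb lam N₁ N₂) v := by
  set M := comb lam N₁ N₂ with hMdef
  have hl1' : 0 ≤ 1 - lam := by linarith
  -- the combination of the two witnesses realizes `W M v`
  obtain ⟨k₁, hk₁K, hbk₁, hβ₁⟩ := h1.1
  obtain ⟨k₂, hk₂K, hbk₂, hβ₂⟩ := h2.1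
  obtain ⟨k, hk⟩ := hφsurj (k₁, k₂) hk₁K hk₂K
  have e1 : N₁ k = N₁ k₁ := by rw [hrep₁ k, hk]
  have e2 : N₂ k = N₂ k₂ := by rw [hrep₂ k, hk]
  have hbwk : bw M v k = lam * W N₁ v + (1 - lam) * W N₂ v := by
    rw [bw_comb, bw_congr e1, bw_congr e2, hbk₁, hbk₂]
  have hWle : W M v ≤ lam * W N₁ v + (1 - lam) * W N₂ v := by
    refine W_le fun k' => ?_
    rw [bw_comb]
    have := mul_le_mul_of_nonneg_left (le_W N₁ v k') hl0
    have := mul_le_mul_of_nonneg_left (le_W N₂ v k') hl1'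
    linarith
  have hWeq : W M v = lam * W N₁ v + (1 - lam) * W N₂ v :=
    le_antisymm hWle (hbwk ▸ le_W M v k)
  have hβM : minBeta M v ≤ lam * minBeta N₁ v + (1 - lam) * minBeta N₂ v := by
    have h := minBeta_le (M := M) (v := v) (k := k) (hbwk.trans hWeq.symm)
    have : (M k).2 = lam * minBeta N₁ v + (1 - lam) * minBeta N₂ v := by
      show lam * (N₁ k).2 + (1 - lam) * (N₂ k).2 = _
      rw [e1, e2, hβ₁, hβ₂]
    linarith [this ▸ h]
  have hWWo : ∀ i, lam * WWo N₁ v i + (1 - lam) * WWo N₂ v i ≤ WWo M v i := by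
    intro i
    obtain ⟨k₁', hk₁K', hb₁'⟩ := h1.2 i
    obtain ⟨k₂', hk₂K', hb₂'⟩ := h2.2 i
    obtain ⟨k', hk'⟩ := hφsurj (k₁', k₂') hk₁K' hk₂K'
    have e1' : N₁ k' = N₁ k₁' := by rw [hrep₁ k', hk']
    have e2' : N₂ k' = N₂ k₂' := by rw [hrep₂ k', hk']
    have : bwWo M v i k' = lam * WWo N₁ v i + (1 - lam) * WWo N₂ v i := by
      rw [bwWo_comb, bwWo_congr e1', bwWo_congr e2', hb₁', hb₂']
    exact this ▸ le_WWo M v i k'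
  have hsum : ∑ i, (lam * WWo N₁ v i + (1 - lam) * WWo N₂ v i) ≤ ∑ i, WWo M v i :=
    Finset.sum_le_sum fun i _ => hWWo i
  rw [Finset.sum_add_distrib, ← Finset.mul_sum, ← Finset.mul_sum] at hsum
  unfold pay
  rw [hWeq]
  ring_nf
  nlinarith [hsum, hβM]

section Meas

variable {m n K : ℕ}

lemma measurable_inf'' {ι : Type*} {s : Finset ι} (hs : s.Nonempty)
    {f : ι → (Fin m → Fin n → ℝ) → ℝ} (hf : ∀ k ∈ s, Measurable (f k)) :
    Measurable (s.inf' hs f) :=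
  Finset.inf'_induction hs _ (fun _f hf _g hg => hf.inf hg) hf

lemma measurable_coord (i : Fin m) (j : Fin n) :
    Measurable (fun v : Fin m → Fin n → ℝ => v i j) :=
  (measurable_pi_apply j).comp (measurable_pi_apply i)

lemma measurable_bw (M : Menu m n K) (k : Fin (K + 1)) :
    Measurable (fun v => bw M v k) := by
  unfold bw dotp
  exact (Finset.measurable_sum _ fun i _ =>
    Finset.measurable_sum _ fun j _ =>
      (measurable_coord i j).mul_const _).add_const _

lemma measurable_bwWo (M : Menu m n K) (i : Fin m) (k : Fin (K + 1)) :
    Measurable (fun v => bwWo M v i k) := by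
  unfold bwWo dotp
  exact (Finset.measurable_sum _ fun l _ =>
    Finset.measurable_sum _ fun j _ =>
      (measurable_coord l j).mul_const _).add_const _

lemma measurable_W (M : Menu m n K) : Measurable (W M) := by
  have : W M = Finset.univ.sup' Finset.univ_nonempty (fun k v => bw M v k) := by
    ext v; rw [Finset.sup'_apply]; rfl
  rw [this]
  exact Finset.measurable_sup' _ fun k _ => measurable_bw M k

lemma measurable_WWo (M : Menu m n K) (i : Fin m) : Measurable (fun v => WWo M v i) := by
  have : (fun v => WWo M v i)
      = Finset.univ.sup' Finset.univ_nonempty (fun k v => bwWo M v i k) := by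
    ext v; rw [Finset.sup'_apply]; rfl
  rw [this]
  exact Finset.measurable_sup' _ fun k _ => measurable_bwWo M i k

lemma minBeta_eq' (M : Menu m n K) (v : Fin m → Fin n → ℝ) :
    minBeta M v = Finset.univ.inf' Finset.univ_nonempty
      (fun k => if bw M v k = W M v then (M k).2
        else Finset.univ.sup' Finset.univ_nonempty (fun k' => (M k').2)) := by
  set B := Finset.univ.sup' Finset.univ_nonempty (fun k' : Fin (K + 1) => (M k').2) with hB
  rw [minBeta_eq]
  apply le_antisymm
  · obtain ⟨k₀, -, h₀⟩ := Finset.exists_mem_eq_inf' (Finset.univ_nonempty (α := Fin (K + 1)))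
      (fun k => if bw M v k = W M v then (M k).2 else B)
    rw [h₀]
    by_cases hc : bw M v k₀ = W M v
    · simp only [hc, if_pos rfl, if_true]
      exact Finset.inf'_le _ (by simp [argS, hc])
    · rw [if_neg hc]
      obtain ⟨k₁, hk₁⟩ := argS_nonempty M v
      calc (argS M v).inf' (argS_nonempty M v) (fun k => (M k).2) ≤ (M k₁).2 :=
            Finset.inf'_le _ hk₁
        _ ≤ B := by
            rw [hB]
            exact Finset.le_sup' (fun k' : Fin (K + 1) => (M k').2) (Finset.mem_univ k₁)
  · obtain ⟨k₀, hk₀, h₀⟩ := Finset.exists_mem_eq_inf' (argS_nonempty M v)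
      (fun k => (M k).2)
    rw [h₀]
    have hc : bw M v k₀ = W M v := by simpa [argS] using hk₀
    calc Finset.univ.inf' Finset.univ_nonempty
          (fun k => if bw M v k = W M v then (M k).2 else B)
        ≤ if bw M v k₀ = W M v then (M k₀).2 else B :=
          Finset.inf'_le _ (Finset.mem_univ k₀)
      _ = (M k₀).2 := if_pos hc

lemma measurable_minBeta (M : Menu m n K) : Measurable (minBeta M) := by
  have : minBeta M = Finset.univ.inf' Finset.univ_nonempty
      (fun k v => if bw M v k = W M v then (M k).2
        else Finset.univ.sup' Finset.univ_nonempty (fun k' => (M k').2)) := by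
    ext v; rw [Finset.inf'_apply]; exact minBeta_eq' M v
  rw [this]
  refine measurable_inf'' _ fun k _ => ?_
  exact Measurable.ite (measurableSet_eq_fun (measurable_bw M k) (measurable_W M))
    measurable_const measurable_const

lemma measurable_pay (M : Menu m n K) : Measurable (pay M) := by
  unfold pay
  exact ((Finset.measurable_sum _ fun i _ => measurable_WWo M i).sub
    ((measurable_W M).const_mul _)).sub (measurable_minBeta M)

lemma measurableSet_good (M : Menu m n K) (K' : Finset (Fin (K + 1))) :
    MeasurableSet {v | GoodEvent M K' v} := by
  have : {v | GoodEvent M K' v} =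
      (⋃ k ∈ K', ({v | bw M v k = W M v} ∩ {v | (M k).2 = minBeta M v})) ∩
      ⋂ i, ⋃ k ∈ K', {v | bwWo M v i k = WWo M v i} := by
    ext v
    simp only [GoodEvent, Set.mem_inter_iff, Set.mem_setOf_eq, Set.mem_iUnion,
      Set.mem_iInter, exists_prop]
  rw [this]
  refine MeasurableSet.inter ?_ ?_
  · refine MeasurableSet.biUnion K'.countable_toSet fun k _ => ?_
    exact (measurableSet_eq_fun (measurable_bw M k) (measurable_W M)).inter
      (measurableSet_eq_fun measurable_const (measurable_minBeta M))
  · refine MeasurableSet.iInter fun i => ?_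
    refine MeasurableSet.biUnion K'.countable_toSet fun k _ => ?_
    exact measurableSet_eq_fun (measurable_bwWo M i k) (measurable_WWo M i)

lemma measurableSet_VP : MeasurableSet (VP m n) := by
  have : VP m n = (⋂ i, ⋂ j, ({v : Fin m → Fin n → ℝ | 0 ≤ v i j} ∩ {v | v i j ≤ 1}))
      ∩ ⋂ i, {v : Fin m → Fin n → ℝ | ∑ j, v i j ≤ 1} := by
    ext v
    simp only [VP, Set.mem_setOf_eq, Set.mem_inter_iff, Set.mem_iInter]
    constructor
    · intro h; exact ⟨fun i j => (h i).1 j, fun i => (h i).2⟩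
    · intro h i; exact ⟨fun j => (h.1 i j), h.2 i⟩
  rw [this]
  refine MeasurableSet.inter ?_ (MeasurableSet.iInter fun i => ?_)
  · refine MeasurableSet.iInter fun i => MeasurableSet.iInter fun j => ?_
    exact (measurableSet_le measurable_const (measurable_coord i j)).inter
      (measurableSet_le (measurable_coord i j) measurable_const)
  · exact measurableSet_le (Finset.measurable_sum _ fun j _ => measurable_coord i j)
      measurable_const

end Meas

section Int

variable {m n K : ℕ}

lemma comb_isMenu {lam : ℝ} (hl0 : 0 ≤ lam) (hl1 : lam ≤ 1) {N₁ N₂ : Menu m n K}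
    (h₁ : IsMenu N₁) (h₂ : IsMenu N₂) : IsMenu (comb lam N₁ N₂) := by
  have hl1' : 0 ≤ 1 - lam := by linarith
  refine ⟨fun k i j => ?_, fun k j => ?_, ?_⟩
  · constructor
    · exact add_nonneg (mul_nonneg hl0 (h₁.1 k i j).1) (mul_nonneg hl1' (h₂.1 k i j).1)
    · calc lam * (N₁ k).1 i j + (1 - lam) * (N₂ k).1 i j
          ≤ lam * 1 + (1 - lam) * 1 := by
            gcongr
            exacts [(h₁.1 k i j).2, (h₂.1 k i j).2]
        _ = 1 := by ring
  · show ∑ i, (lam * (N₁ k).1 i j + (1 - lam) * (N₂ k).1 i j) ≤ 1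
    rw [Finset.sum_add_distrib, ← Finset.mul_sum, ← Finset.mul_sum]
    calc lam * ∑ i, (N₁ k).1 i j + (1 - lam) * ∑ i, (N₂ k).1 i j
        ≤ lam * 1 + (1 - lam) * 1 := by
          have a1 := mul_le_mul_of_nonneg_left (h₁.2.1 k j) hl0
          have a2 := mul_le_mul_of_nonneg_left (h₂.2.1 k j) hl1'
          linarith
      _ = 1 := by ring
  · have e₁ : N₁ 0 = 0 := h₁.2.2
    have e₂ : N₂ 0 = 0 := h₂.2.2
    show (fun i j => lam * (N₁ 0).1 i j + (1 - lam) * (N₂ 0).1 i j,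
        lam * (N₁ 0).2 + (1 - lam) * (N₂ 0).2) = 0
    rw [e₁, e₂]
    simp [Prod.ext_iff]
    rfl

lemma pay_bound {M : Menu m n K} (hM : IsMenu M) {v : Fin m → Fin n → ℝ}
    (hv : v ∈ VP m n) :
    |pay M v| ≤ (m : ℝ) * ((m : ℝ) + Finset.univ.sup' Finset.univ_nonempty
        (fun k => |(M k).2|))
      + ((m : ℝ) + 1) * ((m : ℝ) + Finset.univ.sup' Finset.univ_nonempty
        (fun k => |(M k).2|))
      + Finset.univ.sup' Finset.univ_nonempty (fun k => |(M k).2|) := by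
  set B := Finset.univ.sup' Finset.univ_nonempty (fun k : Fin (K + 1) => |(M k).2|) with hB
  have hBk : ∀ k, |(M k).2| ≤ B := fun k => by
    rw [hB]
    exact Finset.le_sup' (fun k' : Fin (K + 1) => |(M k').2|) (Finset.mem_univ k)
  have hB0 : (0 : ℝ) ≤ B := le_trans (abs_nonneg _) (hBk 0)
  have hd : ∀ k i, 0 ≤ dotp (v i) ((M k).1 i) ∧ dotp (v i) ((M k).1 i) ≤ 1 := by
    intro k i
    constructor
    · exact Finset.sum_nonneg fun j _ => mul_nonneg ((hv i).1 j).1 (hM.1 k i j).1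
    · calc dotp (v i) ((M k).1 i) ≤ ∑ j, v i j := by
            refine Finset.sum_le_sum fun j _ => ?_
            calc v i j * (M k).1 i j ≤ v i j * 1 :=
                  mul_le_mul_of_nonneg_left (hM.1 k i j).2 ((hv i).1 j).1
              _ = v i j := mul_one _
        _ ≤ 1 := (hv i).2
  have hbw : ∀ k, |bw M v k| ≤ (m : ℝ) + B := by
    intro k
    have h1 : (0 : ℝ) ≤ ∑ i, dotp (v i) ((M k).1 i) :=
      Finset.sum_nonneg fun i _ => (hd k i).1
    have h2 : ∑ i, dotp (v i) ((M k).1 i) ≤ (m : ℝ) := by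
      calc ∑ i, dotp (v i) ((M k).1 i) ≤ ∑ _i : Fin m, (1 : ℝ) :=
            Finset.sum_le_sum fun i _ => (hd k i).2
        _ = (m : ℝ) := by simp
    have := abs_le.1 (hBk k)
    rw [abs_le]
    unfold bw
    constructor <;> linarith
  have hbwWo : ∀ i k, |bwWo M v i k| ≤ (m : ℝ) + B := by
    intro i k
    have h1 : (0 : ℝ) ≤ ∑ l ∈ Finset.univ.erase i, dotp (v l) ((M k).1 l) :=
      Finset.sum_nonneg fun l _ => (hd k l).1
    have h2 : ∑ l ∈ Finset.univ.erase i, dotp (v l) ((M k).1 l) ≤ (m : ℝ) := by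
      calc ∑ l ∈ Finset.univ.erase i, dotp (v l) ((M k).1 l)
          ≤ ∑ l, dotp (v l) ((M k).1 l) :=
            Finset.sum_le_sum_of_subset_of_nonneg (Finset.erase_subset _ _)
              (fun l _ _ => (hd k l).1)
        _ ≤ ∑ _l : Fin m, (1 : ℝ) := Finset.sum_le_sum fun l _ => (hd k l).2
        _ = (m : ℝ) := by simp
    have := abs_le.1 (hBk k)
    rw [abs_le]
    unfold bwWo
    constructor <;> linarith
  have hW : |W M v| ≤ (m : ℝ) + B := by
    rw [abs_le]
    constructor
    · calc -((m : ℝ) + B) ≤ bw M v 0 := (abs_le.1 (hbw 0)).1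
        _ ≤ W M v := le_W M v 0
    · exact W_le fun k => (abs_le.1 (hbw k)).2
  have hWWo : ∀ i, |WWo M v i| ≤ (m : ℝ) + B := by
    intro i
    rw [abs_le]
    constructor
    · calc -((m : ℝ) + B) ≤ bwWo M v i 0 := (abs_le.1 (hbwWo i 0)).1
        _ ≤ WWo M v i := le_WWo M v i 0
    · exact WWo_le fun k => (abs_le.1 (hbwWo i k)).2
  have hmb : |minBeta M v| ≤ B := by
    obtain ⟨k, -, hk⟩ := exists_minBeta M v
    rw [← hk]; exact hBk k
  have hsum : |∑ i, WWo M v i| ≤ (m : ℝ) * ((m : ℝ) + B) := by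
    calc |∑ i, WWo M v i| ≤ ∑ i, |WWo M v i| := Finset.abs_sum_le_sum_abs _ _
      _ ≤ ∑ _i : Fin m, ((m : ℝ) + B) := Finset.sum_le_sum fun i _ => hWWo i
      _ = (m : ℝ) * ((m : ℝ) + B) := by simp [mul_comm]; ring
  have hcW : |((m : ℝ) - 1) * W M v| ≤ ((m : ℝ) + 1) * ((m : ℝ) + B) := by
    rw [abs_mul]
    have h1 : |(m : ℝ) - 1| ≤ (m : ℝ) + 1 := by
      rw [abs_le]
      have : (0 : ℝ) ≤ (m : ℝ) := Nat.cast_nonneg m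
      constructor <;> linarith
    exact mul_le_mul h1 hW (abs_nonneg _) (by positivity)
  unfold pay
  calc |∑ i, WWo M v i - ((m : ℝ) - 1) * W M v - minBeta M v|
      ≤ |∑ i, WWo M v i| + |((m : ℝ) - 1) * W M v| + |minBeta M v| := by
        have := abs_sub (∑ i, WWo M v i - ((m : ℝ) - 1) * W M v) (minBeta M v)
        have := abs_sub (∑ i, WWo M v i) (((m : ℝ) - 1) * W M v)
        linarith
    _ ≤ _ := by gcongr

lemma integrable_pay (F : Measure (Fin m → Fin n → ℝ)) [IsProbabilityMeasure F]
    (hFV : F (VP m n) = 1) {M : Menu m n K} (hM : IsMenu M) :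
    Integrable (pay M) F := by
  have haeVP : ∀ᵐ v ∂F, v ∈ VP m n := by
    rw [MeasureTheory.ae_iff]
    have : {v | v ∉ VP m n} = (VP m n)ᶜ := rfl
    rw [this, measure_compl measurableSet_VP (measure_ne_top _ _), hFV, measure_univ]
    simp
  refine (MeasureTheory.integrable_const
    ((m : ℝ) * ((m : ℝ) + Finset.univ.sup' Finset.univ_nonempty (fun k => |(M k).2|))
      + ((m : ℝ) + 1) * ((m : ℝ) + Finset.univ.sup' Finset.univ_nonempty
        (fun k => |(M k).2|))
      + Finset.univ.sup' Finset.univ_nonempty (fun k => |(M k).2|))).mono'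
    (measurable_pay M).aestronglyMeasurable ?_
  exact haeVP.mono fun v hv => by simpa using pay_bound hM hv

end Int
/-- Let `N₁`, `N₂` be AMA menus, `K₁, K₂ ⊆ {0,…,K}`, and
`φ : {0,…,K} → K₁ × K₂` a bijection with components `φ₁, φ₂` such that the `k`-th
option of `N₁` equals its `φ₁ k`-th option and the `k`-th option of `N₂` equals its
`φ₂ k`-th option.  If with probability `1` the good events for `(N₁, K₁)` and
`(N₂, K₂)` hold, then for every `lam ∈ [0,1]` the convex combination
`lam • N₁ + (1-lam) • N₂` has revenue at least `lam * Rev N₁ + (1-lam) * Rev N₂`. -/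
theorem statement13 {m n K : ℕ} (hm : 0 < m) (F : Measure (Fin m → Fin n → ℝ))
    [IsProbabilityMeasure F] (hFV : F (VP m n) = 1)
    (N₁ N₂ : Menu m n K) (hN₁ : IsMenu N₁) (hN₂ : IsMenu N₂)
    (K₁ K₂ : Finset (Fin (K + 1)))
    (φ : Fin (K + 1) → Fin (K + 1) × Fin (K + 1))
    (hφinj : Function.Injective φ)
    (hφmem : ∀ k, (φ k).1 ∈ K₁ ∧ (φ k).2 ∈ K₂)
    (hφsurj : ∀ p : Fin (K + 1) × Fin (K + 1), p.1 ∈ K₁ → p.2 ∈ K₂ → ∃ k, φ k = p)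
    (hrep₁ : ∀ k, N₁ k = N₁ (φ k).1) (hrep₂ : ∀ k, N₂ k = N₂ (φ k).2)
    (hgood₁ : F {v | GoodEvent N₁ K₁ v} = 1)
    (hgood₂ : F {v | GoodEvent N₂ K₂ v} = 1) :
    ∀ lam ∈ Set.Icc (0 : ℝ) 1,
      Rev F (comb lam N₁ N₂) ≥ lam * Rev F N₁ + (1 - lam) * Rev F N₂ := by
  intro lam hlam
  obtain ⟨hl0, hl1⟩ := hlam
  have hIM : IsMenu (comb lam N₁ N₂) := comb_isMenu hl0 hl1 hN₁ hN₂
  have hI1 : Integrable (pay N₁) F := integrable_pay F hFV hN₁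
  have hI2 : Integrable (pay N₂) F := integrable_pay F hFV hN₂
  have hIM' : Integrable (pay (comb lam N₁ N₂)) F := integrable_pay F hFV hIM
  have hae1 : ∀ᵐ v ∂F, GoodEvent N₁ K₁ v := by
    rw [MeasureTheory.ae_iff]
    have : {v | ¬ GoodEvent N₁ K₁ v} = {v | GoodEvent N₁ K₁ v}ᶜ := rfl
    rw [this, measure_compl (measurableSet_good N₁ K₁) (measure_ne_top _ _), hgood₁,
      measure_univ]
    simp
  have hae2 : ∀ᵐ v ∂F, GoodEvent N₂ K₂ v := by
    rw [MeasureTheory.ae_iff]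
    have : {v | ¬ GoodEvent N₂ K₂ v} = {v | GoodEvent N₂ K₂ v}ᶜ := rfl
    rw [this, measure_compl (measurableSet_good N₂ K₂) (measure_ne_top _ _), hgood₂,
      measure_univ]
    simp
  have hkey : ∀ᵐ v ∂F,
      lam * pay N₁ v + (1 - lam) * pay N₂ v ≤ pay (comb lam N₁ N₂) v := by
    filter_upwards [hae1, hae2] with v h1 h2
    exact key lam hl0 hl1 N₁ N₂ K₁ K₂ φ hφsurj hrep₁ hrep₂ v h1 h2
  have hmono : ∫ v, (lam * pay N₁ v + (1 - lam) * pay N₂ v) ∂F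
      ≤ ∫ v, pay (comb lam N₁ N₂) v ∂F :=
    MeasureTheory.integral_mono_ae ((hI1.const_mul lam).add (hI2.const_mul (1 - lam)))
      hIM' hkey
  rw [MeasureTheory.integral_add (hI1.const_mul lam) (hI2.const_mul (1 - lam)),
    MeasureTheory.integral_const_mul, MeasureTheory.integral_const_mul] at hmono
  exact hmono

end AMA
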